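/- Let N be a positive integer, (Ω, F, P) a probability space, and {Ω_{m,n} : 1 ≤ m, n ≤ N} non-negative measurable random variables. Define Γ_{m,m} = Ω_{m,m} and, for m < n, Γ_{m,n} = Ω_{m,n} · Ω_{n,m}. Assume: (i) for each subset S of J_N = {(i,j) : 1 ≤ i ≤ j ≤ N} in which any two distinct pairs have no coordinate in common, the family {Γ_{m,n} : (m,n) ∈ S} is mutually independent; (ii) E(Ω_{m,m}^N) ≤ E(Ω_{1,1}^N) for all m; (iii) there is K ∈ [0, ∞] with E(Ω_{m,n}^{2N}) ≤ K for all m ≠ n. Then E(∏_{1 ≤ m, n ≤ N} Ω_{m,n}) ≤ E(Ω_{1,1}^N) · K^{(N−1)/2}, with all expectations in [0, ∞]. -/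

import Mathlib

open MeasureTheory ProbabilityTheory
open scoped ENNReal

/-- `J N` is the set of pairs `(i, j)` with `1 ≤ i ≤ j ≤ N`. -/
def J (N : ℕ) : Finset (ℕ × ℕ) :=
  (Finset.Icc 1 N ×ˢ Finset.Icc 1 N).filter fun p => p.1 ≤ p.2

/-- A set of pairs has no shared coordinates if any two distinct pairs in it
have no coordinate in common. -/
def NoSharedCoord (S : Finset (ℕ × ℕ)) : Prop :=
  ∀ p ∈ S, ∀ q ∈ S, p ≠ q →
    p.1 ≠ q.1 ∧ p.1 ≠ q.2 ∧ p.2 ≠ q.1 ∧ p.2 ≠ q.2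

/-- `Gam W (m, n) = W (m, m)` if `m = n` and `W (m, n) * W (n, m)` otherwise. -/
noncomputable def Gam {Ω : Type*} (W : ℕ × ℕ → Ω → ℝ≥0∞) (p : ℕ × ℕ) (ω : Ω) : ℝ≥0∞ :=
  if p.1 = p.2 then W p ω else W p ω * W (p.2, p.1) ω

lemma lintegral_prod_of_iIndepFun {Ω : Type*} [MeasurableSpace Ω] {μ : Measure Ω}
    [IsProbabilityMeasure μ] {ι : Type*} (f : ι → Ω → ℝ≥0∞)
    (hindep : iIndepFun f μ)
    (hmeas : ∀ i, Measurable (f i)) (s : Finset ι) :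
    ∫⁻ ω, ∏ i ∈ s, f i ω ∂μ = ∏ i ∈ s, ∫⁻ ω, f i ω ∂μ := by
  classical
  induction s using Finset.induction with
  | empty => simp
  | @insert a s ha ih =>
    have hI : IndepFun (f a) (∏ j ∈ s, f j) μ :=
      (hindep.indepFun_finsetProd_of_notMem hmeas ha).symm
    have hps : Measurable (∏ j ∈ s, f j) := by
      rw [show (∏ j ∈ s, f j) = fun ω => ∏ j ∈ s, f j ω by ext ω; simp]
      exact Finset.measurable_prod _ fun i _ => hmeas i
    calc ∫⁻ ω, ∏ i ∈ insert a s, f i ω ∂μ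
        = ∫⁻ ω, ((f a) * (∏ j ∈ s, f j)) ω ∂μ := by
          apply lintegral_congr; intro ω
          simp [Finset.prod_insert ha]
      _ = (∫⁻ ω, f a ω ∂μ) * ∫⁻ ω, (∏ j ∈ s, f j) ω ∂μ :=
          lintegral_mul_eq_lintegral_mul_lintegral_of_indepFun (hmeas a) hps hI
      _ = ∏ i ∈ insert a s, ∫⁻ ω, f i ω ∂μ := by
          rw [Finset.prod_insert ha, ← ih]
          congr 1
          apply lintegral_congr; intro ω; simp

lemma mod_inj_Icc {N a b : ℕ} (ha1 : 1 ≤ a) (haN : a ≤ N) (hb1 : 1 ≤ b) (hbN : b ≤ N)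
    (h : a % N = b % N) : a = b := by
  rcases lt_or_eq_of_le haN with ha | rfl
  · rcases lt_or_eq_of_le hbN with hb | rfl
    · rwa [Nat.mod_eq_of_lt ha, Nat.mod_eq_of_lt hb] at h
    · rw [Nat.mod_eq_of_lt ha, Nat.mod_self] at h; omega
  · rcases lt_or_eq_of_le hbN with hb | rfl
    · rw [Nat.mod_self, Nat.mod_eq_of_lt hb] at h; omega
    · rfl

lemma mem_J {N : ℕ} {p : ℕ × ℕ} (hp : p ∈ J N) :
    1 ≤ p.1 ∧ p.1 ≤ N ∧ 1 ≤ p.2 ∧ p.2 ≤ N ∧ p.1 ≤ p.2 := by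
  simp only [J, Finset.mem_filter, Finset.mem_product, Finset.mem_Icc] at hp
  tauto

lemma round_noShared (N r : ℕ) :
    NoSharedCoord ((J N).filter fun p => (p.1 + p.2) % N = r) := by
  intro p hp q hq hne
  simp only [Finset.mem_filter] at hp hq
  obtain ⟨h1p, h2p, h3p, h4p, h5p⟩ := mem_J hp.1
  obtain ⟨h1q, h2q, h3q, h4q, h5q⟩ := mem_J hq.1
  have hmod : (p.1 + p.2) % N = (q.1 + q.2) % N := hp.2.trans hq.2.symm
  refine ⟨?_, ?_, ?_, ?_⟩ <;> intro h
  · have : p.2 % N = q.2 % N := by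
      have := (Nat.ModEq.add_left_cancel' p.1 : p.1 + p.2 ≡ p.1 + q.2 [MOD N] → _)
      exact this (by rw [Nat.ModEq]; rw [h] at hmod ⊢; exact hmod)
    exact hne (Prod.ext h (mod_inj_Icc h3p h4p h3q h4q this))
  · have hcan : p.2 % N = q.1 % N := by
      have h2 : p.1 + p.2 ≡ p.1 + q.1 [MOD N] := by
        show (p.1 + p.2) % N = (p.1 + q.1) % N
        rw [show p.1 + q.1 = q.1 + q.2 by omega]; exact hmod
      exact Nat.ModEq.add_left_cancel' p.1 h2
    have h21 : p.2 = q.1 := mod_inj_Icc h3p h4p h1q h2q hcan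
    have : q.1 = q.2 := le_antisymm h5q (by omega)
    exact hne (Prod.ext (by omega) (by omega))
  · have hcan : p.1 % N = q.2 % N := by
      have h2 : p.2 + p.1 ≡ p.2 + q.2 [MOD N] := by
        show (p.2 + p.1) % N = (p.2 + q.2) % N
        rw [show p.2 + p.1 = p.1 + p.2 by omega, show p.2 + q.2 = q.1 + q.2 by omega]
        exact hmod
      exact Nat.ModEq.add_left_cancel' p.2 h2
    have h12 : p.1 = q.2 := mod_inj_Icc h1p h2p h3q h4q hcan
    have : q.1 = q.2 := le_antisymm h5q (by omega)
    exact hne (Prod.ext (by omega) (by omega))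
  · have hcan : p.1 % N = q.1 % N := by
      have h2 : p.2 + p.1 ≡ p.2 + q.1 [MOD N] := by
        show (p.2 + p.1) % N = (p.2 + q.1) % N
        rw [show p.2 + p.1 = p.1 + p.2 by omega, show p.2 + q.1 = q.1 + q.2 by omega]
        exact hmod
      exact Nat.ModEq.add_left_cancel' p.2 h2
    exact hne (Prod.ext (mod_inj_Icc h1p h2p h1q h2q hcan) h)

lemma card_diag (N : ℕ) : ((J N).filter fun p => p.1 = p.2).card = N := by
  have himg : ((J N).filter fun p => p.1 = p.2) = (Finset.Icc 1 N).image fun m => (m, m) := by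
    ext ⟨a, b⟩
    simp only [J, Finset.mem_filter, Finset.mem_product, Finset.mem_Icc, Finset.mem_image,
      Prod.mk.injEq]
    constructor
    · rintro ⟨⟨⟨h1, h2⟩, _⟩, rfl⟩
      exact ⟨a, ⟨h1.1, h1.2⟩, rfl, rfl⟩
    · rintro ⟨m, hm, rfl, rfl⟩
      exact ⟨⟨⟨hm, hm⟩, le_refl _⟩, rfl⟩
  rw [himg, Finset.card_image_of_injective _ (fun a b h => (Prod.ext_iff.1 h).1),
    Nat.card_Icc, Nat.add_sub_cancel]

lemma card_strict (N : ℕ) :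
    N * N = N + (((J N).filter fun p => ¬ p.1 = p.2).card
      + ((J N).filter fun p => ¬ p.1 = p.2).card) := by
  classical
  have hcardT : (Finset.Icc 1 N ×ˢ Finset.Icc 1 N).card = N * N := by
    rw [Finset.card_product, Nat.card_Icc, Nat.add_sub_cancel]
  have hsplitT : (J N).card
      + ((Finset.Icc 1 N ×ˢ Finset.Icc 1 N).filter fun p => ¬ p.1 ≤ p.2).card
      = (Finset.Icc 1 N ×ˢ Finset.Icc 1 N).card :=
    Finset.card_filter_add_card_filter_not _
  have hsplitJ : ((J N).filter fun p => p.1 = p.2).card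
      + ((J N).filter fun p => ¬ p.1 = p.2).card = (J N).card :=
    Finset.card_filter_add_card_filter_not _
  have hlow : (((Finset.Icc 1 N ×ˢ Finset.Icc 1 N).filter fun p => ¬ p.1 ≤ p.2)).card
      = ((J N).filter fun p => ¬ p.1 = p.2).card := by
    apply Finset.card_nbij Prod.swap
    · intro p hp
      simp only [J, Finset.mem_coe, Finset.mem_filter, Finset.mem_product,
        Finset.mem_Icc, Prod.fst_swap, Prod.snd_swap] at hp ⊢
      omega
    · intro p _ q _ h
      exact Prod.swap_injective h
    · intro q hq
      simp only [J, Finset.coe_filter, Finset.mem_filter, Finset.mem_product,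
        Finset.mem_Icc, Set.mem_image, Set.mem_setOf_eq] at hq ⊢
      refine ⟨Prod.swap q, ⟨⟨⟨?_, ?_⟩, ?_⟩, by simp⟩⟩
      · simp only [Prod.fst_swap, Prod.snd_swap]; omega
      · simp only [Prod.fst_swap, Prod.snd_swap]; omega
      · simp only [Prod.fst_swap, Prod.snd_swap]; omega
  rw [card_diag] at hsplitJ
  omega

lemma prod_gam {Ω : Type*} (N : ℕ) (W : ℕ × ℕ → Ω → ℝ≥0∞) (ω : Ω) :
    ∏ p ∈ Finset.Icc 1 N ×ˢ Finset.Icc 1 N, W p ω = ∏ p ∈ J N, Gam W p ω := by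
  classical
  have h1 : ∀ p ∈ J N, Gam W p ω = W p ω * (if p.1 = p.2 then 1 else W (p.2, p.1) ω) := by
    intro p _
    unfold Gam
    split_ifs <;> simp
  rw [Finset.prod_congr rfl h1, Finset.prod_mul_distrib, Finset.prod_ite,
    Finset.prod_const_one, one_mul]
  have h2 : ∏ p ∈ (J N).filter (fun p => ¬ p.1 = p.2), W (p.2, p.1) ω
      = ∏ p ∈ (Finset.Icc 1 N ×ˢ Finset.Icc 1 N).filter (fun p => ¬ p.1 ≤ p.2), W p ω := by
    apply Finset.prod_nbij' Prod.swap Prod.swap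
    · intro p hp
      simp only [J, Finset.mem_filter, Finset.mem_product, Finset.mem_Icc,
        Prod.fst_swap, Prod.snd_swap] at hp ⊢
      omega
    · intro p hp
      simp only [J, Finset.mem_filter, Finset.mem_product, Finset.mem_Icc,
        Prod.fst_swap, Prod.snd_swap] at hp ⊢
      omega
    · intro p _; simp
    · intro p _; simp
    · intro p _; rfl
  rw [h2]
  have : (J N) = (Finset.Icc 1 N ×ˢ Finset.Icc 1 N).filter (fun p => p.1 ≤ p.2) := rfl
  rw [this, Finset.prod_filter_mul_prod_filter_not]

/-- If `{W (m, n) : 1 ≤ m, n ≤ N}` are nonnegative random variables such that the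
variables `Γ_{m,m} = W_{m,m}`, `Γ_{m,n} = W_{m,n} W_{n,m}` (`m < n`) are mutually
independent along any family of pairs sharing no coordinate, the diagonal moments are
dominated by that of `W_{1,1}`, and the off-diagonal `2N`-th moments are bounded by
`K`, then `E (∏_{m,n} W_{m,n}) ≤ E (W_{1,1}^N) * K^{(N-1)/2}`. -/
theorem expectation_prod_le_of_partial_independence'
    {Ω : Type*} [MeasurableSpace Ω] (μ : Measure Ω) [IsProbabilityMeasure μ]
    (N : ℕ) (hN : 0 < N) (W : ℕ × ℕ → Ω → ℝ≥0∞)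
    (hmeas : ∀ p ∈ Finset.Icc 1 N ×ˢ Finset.Icc 1 N, Measurable (W p))
    (hindep : ∀ S : Finset (ℕ × ℕ), S ⊆ J N → NoSharedCoord S →
      iIndepFun
        (fun p : S => Gam W p) μ)
    (hdiag : ∀ m ∈ Finset.Icc 1 N, ∫⁻ ω, W (m, m) ω ^ N ∂μ ≤ ∫⁻ ω, W (1, 1) ω ^ N ∂μ)
    (K : ℝ≥0∞)
    (hK : ∀ m ∈ Finset.Icc 1 N, ∀ n ∈ Finset.Icc 1 N, m ≠ n →
      ∫⁻ ω, W (m, n) ω ^ (2 * N) ∂μ ≤ K) :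
    ∫⁻ ω, ∏ p ∈ Finset.Icc 1 N ×ˢ Finset.Icc 1 N, W p ω ∂μ ≤
      (∫⁻ ω, W (1, 1) ω ^ N ∂μ) * K ^ (((N : ℝ) - 1) / 2) := by
  classical
  set E := ∫⁻ ω, W (1, 1) ω ^ N ∂μ with hE
  have hNR : (N : ℝ) ≠ 0 := Nat.cast_ne_zero.2 hN.ne'
  have hJT : ∀ p ∈ J N, p ∈ Finset.Icc 1 N ×ˢ Finset.Icc 1 N :=
    fun p hp => (Finset.mem_filter.1 hp).1
  have hswapT : ∀ p ∈ J N, (p.2, p.1) ∈ Finset.Icc 1 N ×ˢ Finset.Icc 1 N := by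
    intro p hp
    obtain ⟨a, b, c, d, e⟩ := mem_J hp
    simp only [Finset.mem_product, Finset.mem_Icc]
    omega
  have hGmeas : ∀ p ∈ J N, Measurable (Gam W p) := by
    intro p hp
    unfold Gam
    split_ifs
    · exact hmeas p (hJT p hp)
    · exact (hmeas p (hJT p hp)).mul (hmeas _ (hswapT p hp))
  -- the per-pair bound
  have hbound : ∀ p ∈ J N, ∫⁻ ω, Gam W p ω ^ N ∂μ ≤ (if p.1 = p.2 then E else K) := by
    rintro ⟨m, n⟩ hp
    obtain ⟨h1, h2, h3, h4, h5⟩ := mem_J hp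
    by_cases hd : m = n
    · subst hd
      simp only [if_pos rfl]
      calc ∫⁻ ω, Gam W (m, m) ω ^ N ∂μ = ∫⁻ ω, W (m, m) ω ^ N ∂μ := by
            apply lintegral_congr; intro ω; simp [Gam]
        _ ≤ E := hdiag m (Finset.mem_Icc.2 ⟨h1, h2⟩)
    · simp only [if_neg hd]
      have hmn : (m, n) ∈ Finset.Icc 1 N ×ˢ Finset.Icc 1 N := hJT _ hp
      have hnm : (n, m) ∈ Finset.Icc 1 N ×ˢ Finset.Icc 1 N := hswapT _ hp
      have hfm : Measurable (fun ω => W (m, n) ω ^ N) := (hmeas _ hmn).pow_const N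
      have hfn : Measurable (fun ω => W (n, m) ω ^ N) := (hmeas _ hnm).pow_const N
      have hsq : ∀ x : ℝ≥0∞, (x ^ N) ^ (2 : ℝ) = x ^ (2 * N) := by
        intro x
        rw [← ENNReal.rpow_natCast x N, ← ENNReal.rpow_mul, ← ENNReal.rpow_natCast x (2 * N)]
        congr 1
        push_cast
        ring
      have hm2 : m ∈ Finset.Icc 1 N := Finset.mem_Icc.2 ⟨h1, h2⟩
      have hn2 : n ∈ Finset.Icc 1 N := Finset.mem_Icc.2 ⟨h3, h4⟩
      calc ∫⁻ ω, Gam W (m, n) ω ^ N ∂μ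
          = ∫⁻ ω, ((fun ω => W (m, n) ω ^ N) * fun ω => W (n, m) ω ^ N) ω ∂μ := by
            apply lintegral_congr; intro ω
            simp only [Gam, if_neg hd, Pi.mul_apply]
            rw [mul_pow]
        _ ≤ (∫⁻ ω, (W (m, n) ω ^ N) ^ (2 : ℝ) ∂μ) ^ (1 / (2 : ℝ))
            * (∫⁻ ω, (W (n, m) ω ^ N) ^ (2 : ℝ) ∂μ) ^ (1 / (2 : ℝ)) :=
            ENNReal.lintegral_mul_le_Lp_mul_Lq μ Real.HolderConjugate.two_two
              hfm.aemeasurable hfn.aemeasurable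
        _ ≤ K ^ (1 / (2 : ℝ)) * K ^ (1 / (2 : ℝ)) := by
            gcongr
            · calc ∫⁻ ω, (W (m, n) ω ^ N) ^ (2 : ℝ) ∂μ
                  = ∫⁻ ω, W (m, n) ω ^ (2 * N) ∂μ := by
                    apply lintegral_congr; intro ω; rw [hsq]
                _ ≤ K := hK m hm2 n hn2 hd
            · calc ∫⁻ ω, (W (n, m) ω ^ N) ^ (2 : ℝ) ∂μ
                  = ∫⁻ ω, W (n, m) ω ^ (2 * N) ∂μ := by
                    apply lintegral_congr; intro ω; rw [hsq]
                _ ≤ K := hK n hn2 m hm2 (Ne.symm hd)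
        _ = K := by
            rw [← ENNReal.rpow_add_of_nonneg _ _ (by norm_num) (by norm_num)]
            norm_num
  -- rounds
  have hmapsto : ∀ p ∈ J N, (p.1 + p.2) % N ∈ Finset.range N :=
    fun p _ => Finset.mem_range.2 (Nat.mod_lt _ hN)
  have hround : ∀ r : ℕ,
      ∫⁻ ω, (∏ p ∈ (J N).filter (fun p => (p.1 + p.2) % N = r), Gam W p ω) ^ N ∂μ
      = ∏ p ∈ (J N).filter (fun p => (p.1 + p.2) % N = r), ∫⁻ ω, Gam W p ω ^ N ∂μ := by
    intro r
    set S := (J N).filter (fun p => (p.1 + p.2) % N = r) with hS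
    have hSsub : S ⊆ J N := Finset.filter_subset _ _
    have hind := hindep S hSsub (round_noShared N r)
    have hind2 := hind.comp (fun _ => fun x : ℝ≥0∞ => x ^ N)
      (fun _ => measurable_id.pow_const N)
    have hmeas2 : ∀ i : S, Measurable ((fun x : ℝ≥0∞ => x ^ N) ∘ Gam W (i : ℕ × ℕ)) :=
      fun i => (hGmeas _ (hSsub i.2)).pow_const N
    have hmain := lintegral_prod_of_iIndepFun _ hind2 hmeas2 Finset.univ
    calc ∫⁻ ω, (∏ p ∈ S, Gam W p ω) ^ N ∂μ
        = ∫⁻ ω, ∏ i : S, ((fun x : ℝ≥0∞ => x ^ N) ∘ Gam W (i : ℕ × ℕ)) ω ∂μ := by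
          apply lintegral_congr; intro ω
          rw [← Finset.prod_pow]
          exact (Finset.prod_coe_sort S fun p => Gam W p ω ^ N).symm
      _ = ∏ i : S, ∫⁻ ω, ((fun x : ℝ≥0∞ => x ^ N) ∘ Gam W (i : ℕ × ℕ)) ω ∂μ := hmain
      _ = ∏ p ∈ S, ∫⁻ ω, Gam W p ω ^ N ∂μ :=
          Finset.prod_coe_sort S fun p => ∫⁻ ω, Gam W p ω ^ N ∂μ
  have hcancel : ∀ x : ℝ≥0∞, (x ^ N) ^ ((N : ℝ)⁻¹) = x := by
    intro x
    rw [← ENNReal.rpow_natCast x N, ← ENNReal.rpow_mul, mul_inv_cancel₀ hNR, ENNReal.rpow_one]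
  calc ∫⁻ ω, ∏ p ∈ Finset.Icc 1 N ×ˢ Finset.Icc 1 N, W p ω ∂μ
      = ∫⁻ ω, ∏ r ∈ Finset.range N,
          ((∏ p ∈ (J N).filter (fun p => (p.1 + p.2) % N = r), Gam W p ω) ^ N)
            ^ ((N : ℝ)⁻¹) ∂μ := by
        apply lintegral_congr; intro ω
        rw [prod_gam N W ω, ← Finset.prod_fiberwise_of_maps_to hmapsto (fun p => Gam W p ω)]
        exact Finset.prod_congr rfl fun r _ => (hcancel _).symm
    _ ≤ ∏ r ∈ Finset.range N,
          (∫⁻ ω, (∏ p ∈ (J N).filter (fun p => (p.1 + p.2) % N = r), Gam W p ω) ^ N ∂μ)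
            ^ ((N : ℝ)⁻¹) := by
        refine ENNReal.lintegral_prod_norm_pow_le _ (fun r _ => ?_) ?_ (fun r _ => by positivity)
        · exact ((Finset.measurable_prod _ fun p hp =>
            hGmeas p (Finset.filter_subset _ _ hp)).pow_const N).aemeasurable
        · rw [Finset.sum_const, Finset.card_range, nsmul_eq_mul, mul_inv_cancel₀ hNR]
    _ = ∏ r ∈ Finset.range N, ∏ p ∈ (J N).filter (fun p => (p.1 + p.2) % N = r),
          (∫⁻ ω, Gam W p ω ^ N ∂μ) ^ ((N : ℝ)⁻¹) := by
        refine Finset.prod_congr rfl fun r _ => ?_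
        rw [hround r, ← ENNReal.prod_rpow_of_nonneg (by positivity)]
    _ = ∏ p ∈ J N, (∫⁻ ω, Gam W p ω ^ N ∂μ) ^ ((N : ℝ)⁻¹) :=
        Finset.prod_fiberwise_of_maps_to hmapsto _
    _ ≤ ∏ p ∈ J N, ((if p.1 = p.2 then E else K) ^ ((N : ℝ)⁻¹)) :=
        Finset.prod_le_prod' fun p hp => ENNReal.rpow_le_rpow (hbound p hp) (by positivity)
    _ = (E ^ ((N : ℝ)⁻¹)) ^ (((J N).filter fun p => p.1 = p.2).card)
        * (K ^ ((N : ℝ)⁻¹)) ^ (((J N).filter fun p => ¬ p.1 = p.2).card) := by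
        rw [← Finset.prod_filter_mul_prod_filter_not (J N) (fun p => p.1 = p.2)]
        congr 1
        · rw [Finset.prod_congr rfl (fun p hp => by
            rw [if_pos (Finset.mem_filter.1 hp).2]), Finset.prod_const]
        · rw [Finset.prod_congr rfl (fun p hp => by
            rw [if_neg (Finset.mem_filter.1 hp).2]), Finset.prod_const]
    _ = E * K ^ (((N : ℝ) - 1) / 2) := by
        rw [card_diag]
        congr 1
        · rw [← ENNReal.rpow_natCast (E ^ ((N : ℝ)⁻¹)) N, ← ENNReal.rpow_mul,
            inv_mul_cancel₀ hNR, ENNReal.rpow_one]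
        · rw [← ENNReal.rpow_natCast (K ^ ((N : ℝ)⁻¹)) _, ← ENNReal.rpow_mul]
          congr 1
          have hcast : (N : ℝ) * N = N +
              ((((J N).filter fun p => ¬ p.1 = p.2).card : ℝ)
                + (((J N).filter fun p => ¬ p.1 = p.2).card : ℝ)) := by
            exact_mod_cast congrArg (Nat.cast : ℕ → ℝ) (card_strict N)
          have he : ((((J N).filter fun p => ¬ p.1 = p.2).card : ℕ) : ℝ)
              = (N : ℝ) * ((N : ℝ) - 1) / 2 := by linarith
          rw [he]
          field_simp
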